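/- Let x₁, ..., x_T be positive reals and L > 0. Suppose for each t, c_t ≥ 0 and c_t ≤ L·√(x_t − x_{t-1})/√(x_t) where x_0 > 0 and x_{t-1} ≤ x_t. Then ∑_{t=1}^T c_t ≤ L·√T·√(ln x_T − ln x_0). -/

import Mathlib

open Finset

theorem stmt_14 (T : ℕ) (x : ℕ → ℝ) (c : ℕ → ℝ) (L : ℝ)
    (hL : 0 < L)
    (hpos : ∀ t, 0 < x t)
    (hmono : ∀ t ∈ Finset.Icc 1 T, x (t - 1) ≤ x t)
    (hc0 : ∀ t ∈ Finset.Icc 1 T, 0 ≤ c t)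
    (hc : ∀ t ∈ Finset.Icc 1 T,
      c t ≤ L * Real.sqrt (x t - x (t - 1)) / Real.sqrt (x t)) :
    ∑ t ∈ Finset.Icc 1 T, c t ≤
      L * Real.sqrt T * Real.sqrt (Real.log (x T) - Real.log (x 0)) := by
  set a : ℕ → ℝ := fun t => (x t - x (t - 1)) / x t with ha
  have ha0 : ∀ t ∈ Finset.Icc 1 T, 0 ≤ a t := fun t ht =>
    div_nonneg (sub_nonneg.2 (hmono t ht)) (hpos t).le
  -- step 1: c t ≤ L * sqrt (a t)
  have step1 : ∑ t ∈ Finset.Icc 1 T, c t ≤ ∑ t ∈ Finset.Icc 1 T, L * Real.sqrt (a t) := by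
    refine Finset.sum_le_sum fun t ht => ?_
    refine (hc t ht).trans_eq ?_
    simp only [ha]
    rw [Real.sqrt_div (sub_nonneg.2 (hmono t ht)), mul_div_assoc]
  -- step 2: sum a t ≤ log x_T - log x_0
  have step2 : ∑ t ∈ Finset.Icc 1 T, a t ≤ Real.log (x T) - Real.log (x 0) := by
    have tel : ∑ t ∈ Finset.Icc 1 T, (Real.log (x t) - Real.log (x (t - 1)))
        = Real.log (x T) - Real.log (x 0) := by
      rw [← Finset.Ico_add_one_right_eq_Icc, Finset.sum_Ico_eq_sum_range]
      simp only [Nat.add_sub_cancel, Nat.succ_sub_one]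
      have := Finset.sum_range_sub (fun i => Real.log (x i)) T
      simpa [add_comm] using this
    rw [← tel]
    refine Finset.sum_le_sum fun t ht => ?_
    have hxt := hpos t
    have hxt1 := hpos (t - 1)
    have hmon := hmono t ht
    have h1 : Real.log (x (t-1) / x t) ≤ x (t-1) / x t - 1 :=
      Real.log_le_sub_one_of_pos (by positivity)
    rw [Real.log_div hxt1.ne' hxt.ne'] at h1
    have : a t = 1 - x (t-1) / x t := by
      simp only [ha]; rw [sub_div, div_self hxt.ne']
    rw [this]
    linarith
  -- step 3: Cauchy-Schwarz
  have step3 : ∑ t ∈ Finset.Icc 1 T, Real.sqrt (a t)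
      ≤ Real.sqrt T * Real.sqrt (Real.log (x T) - Real.log (x 0)) := by
    have hsq : (∑ t ∈ Finset.Icc 1 T, Real.sqrt (a t)) ^ 2
        ≤ (#(Finset.Icc 1 T) : ℝ) * ∑ t ∈ Finset.Icc 1 T, Real.sqrt (a t) ^ 2 :=
      sq_sum_le_card_mul_sum_sq
    have hcard : (#(Finset.Icc 1 T) : ℝ) ≤ (T : ℝ) := by
      rw [Nat.card_Icc]; push_cast; simp
    have hsum : ∑ t ∈ Finset.Icc 1 T, Real.sqrt (a t) ^ 2 = ∑ t ∈ Finset.Icc 1 T, a t :=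
      Finset.sum_congr rfl fun t ht => Real.sq_sqrt (ha0 t ht)
    have hnn : 0 ≤ ∑ t ∈ Finset.Icc 1 T, Real.sqrt (a t) :=
      Finset.sum_nonneg fun t _ => Real.sqrt_nonneg _
    have hlog : 0 ≤ Real.log (x T) - Real.log (x 0) :=
      le_trans (Finset.sum_nonneg ha0) step2
    have key : (∑ t ∈ Finset.Icc 1 T, Real.sqrt (a t)) ^ 2
        ≤ (T : ℝ) * (Real.log (x T) - Real.log (x 0)) := by
      calc (∑ t ∈ Finset.Icc 1 T, Real.sqrt (a t)) ^ 2
          ≤ (#(Finset.Icc 1 T) : ℝ) * ∑ t ∈ Finset.Icc 1 T, a t := by rw [← hsum]; exact hsq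
        _ ≤ (T : ℝ) * (Real.log (x T) - Real.log (x 0)) :=
            mul_le_mul hcard step2 (Finset.sum_nonneg ha0) (by positivity)
    calc ∑ t ∈ Finset.Icc 1 T, Real.sqrt (a t)
        = Real.sqrt ((∑ t ∈ Finset.Icc 1 T, Real.sqrt (a t)) ^ 2) := by
          rw [Real.sqrt_sq hnn]
      _ ≤ Real.sqrt ((T : ℝ) * (Real.log (x T) - Real.log (x 0))) :=
          Real.sqrt_le_sqrt key
      _ = Real.sqrt T * Real.sqrt (Real.log (x T) - Real.log (x 0)) :=
          Real.sqrt_mul (by positivity) _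
  calc ∑ t ∈ Finset.Icc 1 T, c t
      ≤ ∑ t ∈ Finset.Icc 1 T, L * Real.sqrt (a t) := step1
    _ = L * ∑ t ∈ Finset.Icc 1 T, Real.sqrt (a t) := by rw [Finset.mul_sum]
    _ ≤ L * (Real.sqrt T * Real.sqrt (Real.log (x T) - Real.log (x 0))) :=
        mul_le_mul_of_nonneg_left step3 hL.le
    _ = L * Real.sqrt T * Real.sqrt (Real.log (x T) - Real.log (x 0)) := by ring
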